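/- Let α ∈ (−1/2, 1/2) and let 0 ≤ v < s be real numbers. For integers n ≥ 1 define A_n(v,s) = n^{2α+1} ∫₀^{⌊nv⌋/n} ((s − u)^α − (⌊ns⌋/n − u)^α)((v − u)^α − (⌊nv⌋/n − u)^α) du, where ⌊·⌋ denotes the floor function. Then A_n(v,s) → 0 as n → ∞. -/

import Mathlib

open MeasureTheory Set

set_option maxHeartbeats 1000000

/-- Mean value inequality for real powers. -/
lemma abs_rpow_sub_rpow_le {p L x y : ℝ} (hx : 0 < x) (hxy : x ≤ y)
    (hL : ∀ z ∈ Set.Icc x y, |p * z ^ (p - 1)| ≤ L) :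
    |y ^ p - x ^ p| ≤ L * (y - x) := by
  have hder : ∀ z ∈ Set.Icc x y,
      HasDerivWithinAt (fun t : ℝ => t ^ p) (p * z ^ (p - 1)) (Set.Icc x y) z := by
    intro z hz
    exact (Real.hasDerivAt_rpow_const
      (Or.inl (ne_of_gt (lt_of_lt_of_le hx hz.1)))).hasDerivWithinAt
  have := Convex.norm_image_sub_le_of_norm_hasDerivWithin_le hder
    (fun z hz => hL z hz) (convex_Icc x y)
    (Set.left_mem_Icc.2 hxy) (Set.right_mem_Icc.2 hxy)
  rw [Real.norm_eq_abs, Real.norm_eq_abs, abs_of_nonneg (by linarith : (0:ℝ) ≤ y - x)] at this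
  exact this

/-- Bounding the norm of an integral of a product. -/
lemma integral_prod_bound {F1 F2 g : ℝ → ℝ} {a b c B : ℝ} (hc : 0 ≤ c)
    (hF1 : ∀ u ∈ Set.Ioo a b, |F1 u| ≤ c)
    (hF2 : ∀ u ∈ Set.Ioo a b, |F2 u| ≤ g u)
    (hg : MeasureTheory.IntegrableOn g (Set.Ioc a b))
    (hB : (∫ u in Set.Ioc a b, g u) ≤ B) :
    ‖∫ u in Set.Ioc a b, F1 u * F2 u‖ ≤ c * B := by
  have hg' : MeasureTheory.IntegrableOn g (Set.Ioo a b) := hg.mono_set Set.Ioo_subset_Ioc_self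
  rw [MeasureTheory.setIntegral_congr_set (MeasureTheory.Ioo_ae_eq_Ioc (μ := volume)).symm] at hB ⊢
  clear hg
  have h1 : ‖∫ u in Set.Ioo a b, F1 u * F2 u‖ ≤ ∫ u in Set.Ioo a b, c * g u := by
    apply MeasureTheory.norm_integral_le_of_norm_le (hg'.const_mul c)
    filter_upwards [MeasureTheory.ae_restrict_mem measurableSet_Ioo] with u hu
    rw [Real.norm_eq_abs, abs_mul]
    have h2 := hF2 u hu
    exact mul_le_mul (hF1 u hu) h2 (abs_nonneg _) hc
  rw [MeasureTheory.integral_const_mul] at h1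
  exact h1.trans (mul_le_mul_of_nonneg_left hB hc)


/-- The quantity `A_n(v,s)` from Lemma A.2 of the paper. -/
noncomputable def A (α : ℝ) (n : ℕ) (v s : ℝ) : ℝ :=
  (n : ℝ) ^ (2*α + 1) *
    ∫ u in Set.Ioc (0:ℝ) ((⌊(n:ℝ) * v⌋ : ℝ) / n),
      ((s - u) ^ α - ((⌊(n:ℝ) * s⌋ : ℝ) / n - u) ^ α) *
        ((v - u) ^ α - ((⌊(n:ℝ) * v⌋ : ℝ) / n - u) ^ α)

/-- convergence part of Lemma A.2. -/
theorem stmt_9 (α v s : ℝ) (hα : α ∈ Set.Ioo (-(1:ℝ)/2) (1/2))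
    (hv : 0 ≤ v) (hvs : v < s) :
    Filter.Tendsto (fun n : ℕ => A α n v s) Filter.atTop (nhds 0) := by
  obtain ⟨hαl, hαr⟩ := hα
  rcases eq_or_lt_of_le hv with hv0 | hv0
  · -- v = 0 case
    have hz : ∀ n : ℕ, A α n v s = 0 := by
      intro n
      simp [A, ← hv0]
    exact Filter.Tendsto.congr (fun n => (hz n).symm) tendsto_const_nhds
  · -- 0 < v
    set θ : ℝ := s - v with hθdef
    have hθ : 0 < θ := sub_pos.2 hvs
    have hα1 : (-1:ℝ) < α := by linarith
    have hα1' : (0:ℝ) < α + 1 := by linarith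
    set L0 : ℝ := |α| * (θ/2) ^ (α - 1) with hL0def
    have hL0 : 0 ≤ L0 := by positivity
    set γ : ℝ := if 0 ≤ α then 2*α - 1 else 2*α with hγdef
    have hγ : γ < 0 := by
      rw [hγdef]; split_ifs with h <;> linarith
    set C : ℝ := L0 * (if 0 ≤ α then v ^ α else v ^ (α+1) / (α+1)) with hCdef
    suffices h : ∀ᶠ n : ℕ in Filter.atTop, ‖A α n v s‖ ≤ C * (n:ℝ) ^ γ by
      apply squeeze_zero_norm' h
      have h1 : Filter.Tendsto (fun x : ℝ => x ^ γ) Filter.atTop (nhds 0) := by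
        have := tendsto_rpow_neg_atTop (show 0 < -γ by linarith)
        simpa [neg_neg] using this
      have h2 := (h1.comp tendsto_natCast_atTop_atTop).const_mul C
      simpa using h2
    have hev1 : ∀ᶠ n : ℕ in Filter.atTop, (1:ℝ) ≤ (n:ℝ) :=
      tendsto_natCast_atTop_atTop.eventually_ge_atTop 1
    have hev2 : ∀ᶠ n : ℕ in Filter.atTop, 2/θ ≤ (n:ℝ) :=
      tendsto_natCast_atTop_atTop.eventually_ge_atTop _
    have hev3 : ∀ᶠ n : ℕ in Filter.atTop, 1/v ≤ (n:ℝ) :=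
      tendsto_natCast_atTop_atTop.eventually_ge_atTop _
    filter_upwards [hev1, hev2, hev3] with n hn1 hn2 hn3
    have hn0 : (0:ℝ) < n := lt_of_lt_of_le zero_lt_one hn1
    set m : ℝ := (⌊(n:ℝ) * v⌋ : ℝ) / (n:ℝ) with hmdef
    set t : ℝ := (⌊(n:ℝ) * s⌋ : ℝ) / (n:ℝ) with htdef
    -- basic floor facts
    have hfv1 : (⌊(n:ℝ) * v⌋ : ℝ) ≤ (n:ℝ) * v := Int.floor_le _
    have hfv2 : (n:ℝ) * v - 1 < (⌊(n:ℝ) * v⌋ : ℝ) := Int.sub_one_lt_floor _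
    have hfs1 : (⌊(n:ℝ) * s⌋ : ℝ) ≤ (n:ℝ) * s := Int.floor_le _
    have hfs2 : (n:ℝ) * s - 1 < (⌊(n:ℝ) * s⌋ : ℝ) := Int.sub_one_lt_floor _
    have hnv : 1 ≤ (n:ℝ) * v := by
      rw [div_le_iff₀ hv0] at hn3; linarith
    have hmv : m ≤ v := by
      rw [hmdef, div_le_iff₀ hn0]; linarith [mul_comm v (n:ℝ)]
    have hm0 : 0 < m := by
      rw [hmdef]; apply div_pos _ hn0; linarith
    have hvm : v - m ≤ 1/(n:ℝ) := by
      rw [hmdef, sub_le_iff_le_add, ← add_div, le_div_iff₀ hn0]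
      linarith [mul_comm v (n:ℝ)]
    have hts : t ≤ s := by
      rw [htdef, div_le_iff₀ hn0]; linarith [mul_comm s (n:ℝ)]
    have hst : s - t ≤ 1/(n:ℝ) := by
      rw [htdef, sub_le_iff_le_add, ← add_div, le_div_iff₀ hn0]
      linarith [mul_comm s (n:ℝ)]
    have hinv : 1/(n:ℝ) ≤ θ/2 := by
      rw [div_le_div_iff₀ hn0 two_pos]
      rw [div_le_iff₀ hθ] at hn2
      linarith [mul_comm θ (n:ℝ)]
    have htθ : v + θ/2 ≤ t := by
      have : s - 1/(n:ℝ) ≤ t := by linarith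
      have h2 : s = v + θ := by rw [hθdef]; ring
      linarith
    -- the F1 bound
    have hF1 : ∀ u ∈ Set.Ioo (0:ℝ) m,
        |(s - u) ^ α - (t - u) ^ α| ≤ L0 * (1/(n:ℝ)) := by
      intro u hu
      have hu1 : 0 < u := hu.1
      have hu2 : u < m := hu.2
      have htu : θ/2 ≤ t - u := by
        have : u ≤ v := le_trans hu2.le hmv
        linarith
      have htu0 : 0 < t - u := lt_of_lt_of_le (by linarith) htu
      have hsu : t - u ≤ s - u := by linarith
      have hmvt := abs_rpow_sub_rpow_le (p := α) (L := L0) htu0 hsu ?_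
      · calc |(s - u) ^ α - (t - u) ^ α| ≤ L0 * ((s - u) - (t - u)) := hmvt
          _ = L0 * (s - t) := by ring_nf
          _ ≤ L0 * (1/(n:ℝ)) := mul_le_mul_of_nonneg_left hst hL0
      · intro z hz
        have hz0 : 0 < z := lt_of_lt_of_le htu0 hz.1
        rw [abs_mul, abs_of_pos (Real.rpow_pos_of_pos hz0 _)]
        rw [hL0def]
        apply mul_le_mul_of_nonneg_left _ (abs_nonneg α)
        apply Real.rpow_le_rpow_of_nonpos (by linarith) (by linarith [hz.1]) (by linarith)
    -- unfold A
    have hAnorm : ‖A α n v s‖ = (n:ℝ) ^ (2*α+1) *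
        ‖∫ u in Set.Ioc (0:ℝ) m,
          ((s - u) ^ α - (t - u) ^ α) * ((v - u) ^ α - (m - u) ^ α)‖ := by
      rw [A, norm_mul, Real.norm_of_nonneg (Real.rpow_nonneg hn0.le _)]
    rw [hAnorm]
    by_cases hα0 : 0 ≤ α
    · -- case α ≥ 0
      have hcont1 : Continuous fun u : ℝ => (v - u) ^ α :=
        (Real.continuous_rpow_const hα0).comp (continuous_const.sub continuous_id)
      have hcont2 : Continuous fun u : ℝ => (m - u) ^ α :=
        (Real.continuous_rpow_const hα0).comp (continuous_const.sub continuous_id)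
      have hF2 : ∀ u ∈ Set.Ioo (0:ℝ) m,
          |(v - u) ^ α - (m - u) ^ α| ≤ (v - u) ^ α - (m - u) ^ α := by
        intro u hu
        have h1 : (m - u) ^ α ≤ (v - u) ^ α :=
          Real.rpow_le_rpow (by linarith [hu.2]) (by linarith [hmv]) hα0
        rw [abs_of_nonneg (by linarith)]
      have hgint : MeasureTheory.IntegrableOn
          (fun u : ℝ => (v - u) ^ α - (m - u) ^ α) (Set.Ioc (0:ℝ) m) := by
        exact (hcont1.sub hcont2).integrableOn_Ioc
      have hval : (∫ u in Set.Ioc (0:ℝ) m, ((v - u) ^ α - (m - u) ^ α)) =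
          (v ^ (α+1) - (v - m) ^ (α+1)) / (α+1) - m ^ (α+1) / (α+1) := by
        rw [← intervalIntegral.integral_of_le hm0.le]
        rw [intervalIntegral.integral_sub (hcont1.intervalIntegrable 0 m)
          (hcont2.intervalIntegrable 0 m)]
        rw [intervalIntegral.integral_comp_sub_left (fun x => x ^ α) v,
          intervalIntegral.integral_comp_sub_left (fun x => x ^ α) m]
        rw [integral_rpow (Or.inl hα1), integral_rpow (Or.inl hα1)]
        rw [sub_zero, sub_self, Real.zero_rpow (ne_of_gt hα1')]
        ring
      have hmvt2 : v ^ (α+1) - m ^ (α+1) ≤ ((α+1) * v ^ α) * (v - m) := by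
        have := abs_rpow_sub_rpow_le (p := α+1) (L := (α+1) * v ^ α) hm0 hmv ?_
        · exact le_trans (le_abs_self _) this
        · intro z hz
          have hz0 : 0 < z := lt_of_lt_of_le hm0 hz.1
          rw [show α + 1 - 1 = α by ring, abs_mul, abs_of_pos hα1',
            abs_of_pos (Real.rpow_pos_of_pos hz0 _)]
          exact mul_le_mul_of_nonneg_left
            (Real.rpow_le_rpow hz0.le hz.2 hα0) hα1'.le
      have hB : (∫ u in Set.Ioc (0:ℝ) m, ((v - u) ^ α - (m - u) ^ α)) ≤
          v ^ α * (1/(n:ℝ)) := by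
        rw [hval]
        have h1 : (0:ℝ) ≤ (v - m) ^ (α+1) := Real.rpow_nonneg (by linarith) _
        have h3 : ((α+1) * v ^ α) * (v - m) ≤ ((α+1) * v ^ α) * (1/(n:ℝ)) :=
          mul_le_mul_of_nonneg_left hvm (by positivity)
        rw [div_sub_div_same, div_le_iff₀ hα1']
        nlinarith [hmvt2, h1, h3]
      have hbound := integral_prod_bound (by positivity : (0:ℝ) ≤ L0 * (1/(n:ℝ)))
        hF1 hF2 hgint hB
      calc (n:ℝ) ^ (2*α+1) * ‖∫ u in Set.Ioc (0:ℝ) m,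
            ((s - u) ^ α - (t - u) ^ α) * ((v - u) ^ α - (m - u) ^ α)‖
          ≤ (n:ℝ) ^ (2*α+1) * ((L0 * (1/(n:ℝ))) * (v ^ α * (1/(n:ℝ)))) :=
            mul_le_mul_of_nonneg_left hbound (Real.rpow_nonneg hn0.le _)
        _ = (L0 * v ^ α) * (n:ℝ) ^ (2*α-1) := by
            have hpow1 : (n:ℝ) ^ (2*α+1) * (1/(n:ℝ) * (1/(n:ℝ))) = (n:ℝ) ^ (2*α-1) := by
              rw [show (2*α-1 : ℝ) = 2*α+1 + (-1) + (-1) by ring,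
                Real.rpow_add hn0 _ (-1:ℝ), Real.rpow_add hn0 _ (-1:ℝ), Real.rpow_neg_one]
              ring
            rw [← hpow1]; ring
        _ = C * (n:ℝ) ^ γ := by
            rw [hCdef, hγdef, if_pos hα0, if_pos hα0]
    · -- case α < 0
      push_neg at hα0
      have hF2 : ∀ u ∈ Set.Ioo (0:ℝ) m,
          |(v - u) ^ α - (m - u) ^ α| ≤ (m - u) ^ α := by
        intro u hu
        have hmu : 0 < m - u := by linarith [hu.2]
        have h1 : (v - u) ^ α ≤ (m - u) ^ α :=
          Real.rpow_le_rpow_of_nonpos hmu (by linarith [hmv]) hα0.le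
        have h2 : 0 < (v - u) ^ α :=
          Real.rpow_pos_of_pos (by linarith [hu.2, hmv]) _
        rw [abs_le]
        constructor <;> linarith
      have hgint : MeasureTheory.IntegrableOn
          (fun u : ℝ => (m - u) ^ α) (Set.Ioc (0:ℝ) m) := by
        have h1 : IntervalIntegrable (fun x : ℝ => x ^ α) volume 0 m :=
          intervalIntegral.intervalIntegrable_rpow' hα1
        have h2 := (h1.comp_sub_left m).symm
        rw [sub_zero, sub_self] at h2
        exact (intervalIntegrable_iff_integrableOn_Ioc_of_le hm0.le).1 h2
      have hB : (∫ u in Set.Ioc (0:ℝ) m, (m - u) ^ α) ≤ v ^ (α+1) / (α+1) := by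
        rw [← intervalIntegral.integral_of_le hm0.le,
          intervalIntegral.integral_comp_sub_left (fun x => x ^ α) m,
          sub_zero, sub_self, integral_rpow (Or.inl hα1),
          Real.zero_rpow (ne_of_gt hα1'), sub_zero]
        rw [div_le_div_iff₀ hα1' hα1']
        exact mul_le_mul_of_nonneg_right (Real.rpow_le_rpow hm0.le hmv hα1'.le) hα1'.le
      have hbound := integral_prod_bound (by positivity : (0:ℝ) ≤ L0 * (1/(n:ℝ)))
        hF1 hF2 hgint hB
      calc (n:ℝ) ^ (2*α+1) * ‖∫ u in Set.Ioc (0:ℝ) m,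
            ((s - u) ^ α - (t - u) ^ α) * ((v - u) ^ α - (m - u) ^ α)‖
          ≤ (n:ℝ) ^ (2*α+1) * ((L0 * (1/(n:ℝ))) * (v ^ (α+1) / (α+1))) :=
            mul_le_mul_of_nonneg_left hbound (Real.rpow_nonneg hn0.le _)
        _ = (L0 * (v ^ (α+1) / (α+1))) * (n:ℝ) ^ (2*α) := by
            have hpow2 : (n:ℝ) ^ (2*α+1) * (1/(n:ℝ)) = (n:ℝ) ^ (2*α) := by
              rw [Real.rpow_add hn0 (2*α) 1, Real.rpow_one]
              field_simp
            rw [← hpow2]; ring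
        _ = C * (n:ℝ) ^ γ := by
            rw [hCdef, hγdef, if_neg (not_le.2 hα0), if_neg (not_le.2 hα0)]
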